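/- For combinatorial trees S and T in which every vertex has a non-neighbor: S embeds into T as a graph if and only if Q_S embeds into Q_T as a quandle. -/

import Mathlib

open SimpleGraph in
private lemma tri_free (T : SimpleGraph ℕ) (hT : T.IsAcyclic) {a b d : ℕ}
    (hab : T.Adj a b) (hda : T.Adj d a) (hdb : T.Adj d b) : False := by
  refine hT (Walk.cons hab (Walk.cons hdb.symm (Walk.cons hda Walk.nil))) ?_
  simp [Walk.isCycle_def, Walk.isTrail_def, hab.ne, hda.ne, hdb.ne, hda.ne', hdb.ne', hab.ne',
    Sym2.eq_iff]

private lemma pigeon3 {p q r : ℕ × Bool} (h1 : p.1 = q.1) (h2 : p.1 = r.1)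
    (hpq : p ≠ q) (hpr : p ≠ r) (hqr : q ≠ r) : False := by
  obtain ⟨p1, p2⟩ := p; obtain ⟨q1, q2⟩ := q; obtain ⟨r1, r2⟩ := r
  simp only at h1 h2
  subst h1; subst h2
  cases p2 <;> cases q2 <;> cases r2 <;> simp_all

open Classical in
/-- The quandle operation on `ℕ × Bool` associated to a graph `T`. -/
noncomputable def quandleOp (T : SimpleGraph ℕ) (x y : ℕ × Bool) : ℕ × Bool :=
  if x.1 = y.1 ∨ T.Adj x.1 y.1 then y else (y.1, !y.2)

theorem graph_embeds_iff_quandle_embeds (S T : SimpleGraph ℕ)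
    (hSconn : S.Connected) (hSacyc : S.IsAcyclic)
    (hTconn : T.Connected) (hTacyc : T.IsAcyclic)
    (hSnn : ∀ x : ℕ, ∃ y : ℕ, y ≠ x ∧ ¬ S.Adj x y)
    (hTnn : ∀ x : ℕ, ∃ y : ℕ, y ≠ x ∧ ¬ T.Adj x y) :
    (∃ f : ℕ → ℕ, Function.Injective f ∧
        ∀ u v : ℕ, S.Adj u v ↔ T.Adj (f u) (f v)) ↔
    (∃ ρ : ℕ × Bool → ℕ × Bool, Function.Injective ρ ∧
        ∀ x y : ℕ × Bool, ρ (quandleOp S x y) = quandleOp T (ρ x) (ρ y)) := by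
  have qpos : ∀ (G : SimpleGraph ℕ) (x y : ℕ × Bool),
      (x.1 = y.1 ∨ G.Adj x.1 y.1) → quandleOp G x y = y := by
    intro G x y h; unfold quandleOp; exact if_pos h
  have qneg : ∀ (G : SimpleGraph ℕ) (x y : ℕ × Bool),
      ¬(x.1 = y.1 ∨ G.Adj x.1 y.1) → quandleOp G x y = (y.1, !y.2) := by
    intro G x y h; unfold quandleOp; exact if_neg h
  constructor
  · rintro ⟨f, hf, hadj⟩
    refine ⟨fun x => (f x.1, x.2), ?_, ?_⟩
    · rintro ⟨u, i⟩ ⟨v, j⟩ h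
      simp only [Prod.mk.injEq] at h ⊢
      exact ⟨hf h.1, h.2⟩
    · rintro ⟨u, i⟩ ⟨v, j⟩
      by_cases h : u = v ∨ S.Adj u v
      · have h' : f u = f v ∨ T.Adj (f u) (f v) := h.imp (congrArg f) ((hadj u v).1)
        rw [qpos S (u,i) (v,j) h, qpos T _ _ h']
      · have h' : ¬(f u = f v ∨ T.Adj (f u) (f v)) := by
          rintro (h1 | h2)
          · exact h (Or.inl (hf h1))
          · exact h (Or.inr ((hadj u v).2 h2))
        rw [qneg S (u,i) (v,j) h, qneg T _ _ h']
  · rintro ⟨ρ, hinj, hρ⟩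
    have key : ∀ (u v : ℕ) (i j : Bool),
        (u = v ∨ S.Adj u v) ↔
          ((ρ (u,i)).1 = (ρ (v,j)).1 ∨ T.Adj (ρ (u,i)).1 (ρ (v,j)).1) := by
      intro u v i j
      have h := hρ (u,i) (v,j)
      constructor
      · intro h1
        by_contra h2
        rw [qpos S (u,i) (v,j) h1, qneg T _ _ h2] at h
        have := congrArg Prod.snd h
        simp at this
      · intro h2
        by_contra h1
        rw [qneg S (u,i) (v,j) h1, qpos T _ _ h2] at h
        have := hinj h
        simp at this
    have mem2 : ∀ d c1 c2 : ℕ, T.Adj c1 c2 → (d = c1 ∨ T.Adj d c1) →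
        (d = c2 ∨ T.Adj d c2) → d = c1 ∨ d = c2 := by
      rintro d c1 c2 h12 (h | h) (h' | h')
      exacts [Or.inl h, Or.inl h, Or.inr h', (tri_free T hTacyc h12 h h').elim]
    have exadj : ∀ p : ℕ, ∃ q, S.Adj p q := by
      intro p
      obtain ⟨w⟩ := hSconn.preconnected p (p+1)
      cases w with
      | cons h _ => exact ⟨_, h⟩
    -- columns are preserved
    have col : ∀ u : ℕ, (ρ (u, false)).1 = (ρ (u, true)).1 := by
      intro u
      by_contra hab'
      have hAB : T.Adj (ρ (u,false)).1 (ρ (u,true)).1 :=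
        ((key u u false true).1 (Or.inl rfl)).resolve_left hab'
      have mem : ∀ (x : ℕ) (i : Bool), (x = u ∨ S.Adj x u) →
          (ρ (x,i)).1 = (ρ (u,false)).1 ∨ (ρ (x,i)).1 = (ρ (u,true)).1 := by
        intro x i hx
        exact mem2 _ _ _ hAB ((key x u i false).1 hx) ((key x u i true).1 hx)
      obtain ⟨v, hv⟩ := exadj u
      have huv : u ≠ v := hv.ne
      -- the images of v occupy one slot in each of the two columns
      have hvsplit : ((ρ (v,false)).1 = (ρ (u,false)).1 ∧ (ρ (v,true)).1 = (ρ (u,true)).1) ∨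
          ((ρ (v,false)).1 = (ρ (u,true)).1 ∧ (ρ (v,true)).1 = (ρ (u,false)).1) := by
        have hvf := mem v false (Or.inr hv.symm)
        have hvt := mem v true (Or.inr hv.symm)
        have d1 : ρ (v,false) ≠ ρ (v,true) := fun h => by
          have := hinj h; simp at this
        have d2 : ρ (u,false) ≠ ρ (v,false) := fun h => huv (by have := hinj h; simpa using this)
        have d3 : ρ (u,false) ≠ ρ (v,true) := fun h => by
          have := hinj h; simp [huv] at this
        have d4 : ρ (u,true) ≠ ρ (v,false) := fun h => by
          have := hinj h; simp [huv] at this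
        have d5 : ρ (u,true) ≠ ρ (v,true) := fun h => by
          have := hinj h; simp [huv] at this
        rcases hvf with hf | hf <;> rcases hvt with ht | ht
        · exact (pigeon3 hf.symm ht.symm d2 d3 d1).elim
        · exact Or.inl ⟨hf, ht⟩
        · exact Or.inr ⟨hf, ht⟩
        · exact (pigeon3 hf.symm ht.symm d4 d5 d1).elim
      -- {u, v} is closed under adjacency
      have closed : ∀ x y : ℕ, (x = u ∨ x = v) → S.Adj x y → (y = u ∨ y = v) := by
        intro x y hx hxy
        by_contra hy
        push_neg at hy
        obtain ⟨hyu, hyv⟩ := hy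
        have hyim : ∀ i : Bool,
            (ρ (y,i)).1 = (ρ (u,false)).1 ∨ (ρ (y,i)).1 = (ρ (u,true)).1 := by
          rcases hx with rfl | rfl
          · intro i; exact mem y i (Or.inr hxy.symm)
          · intro i
            have k1 := (key y x i false).1 (Or.inr hxy.symm)
            have k2 := (key y x i true).1 (Or.inr hxy.symm)
            rcases hvsplit with ⟨e1, e2⟩ | ⟨e1, e2⟩
            · rw [e1] at k1; rw [e2] at k2
              exact mem2 _ _ _ hAB k1 k2
            · rw [e1] at k1; rw [e2] at k2
              exact mem2 _ _ _ hAB k2 k1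
        -- six distinct points mapped injectively into four slots
        have hvy : v ≠ y := fun h => hyv h.symm
        have huy : u ≠ y := fun h => hyu h.symm
        have hcard : (({u, v, y} : Finset ℕ) ×ˢ (Finset.univ : Finset Bool)).card ≤
            (({(ρ (u,false)).1, (ρ (u,true)).1} : Finset ℕ) ×ˢ (Finset.univ : Finset Bool)).card := by
          apply Finset.card_le_card_of_injOn ρ
          · rintro ⟨x, i⟩ hp
            rw [Finset.mem_coe, Finset.mem_product] at hp ⊢
            refine ⟨?_, Finset.mem_univ _⟩
            simp only [Finset.mem_insert, Finset.mem_singleton] at hp ⊢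
            rcases hp.1 with rfl | rfl | rfl
            · exact mem x i (Or.inl rfl)
            · exact mem x i (Or.inr hv.symm)
            · exact hyim i
          · exact hinj.injOn
        rw [Finset.card_product, Finset.card_product] at hcard
        have c1 : ({u, v, y} : Finset ℕ).card = 3 := by
          rw [Finset.card_insert_of_notMem (by simp [huv, huy]),
            Finset.card_insert_of_notMem (by simp [hvy])]
          simp
        have c2 : ({(ρ (u,false)).1, (ρ (u,true)).1} : Finset ℕ).card ≤ 2 :=
          le_trans (Finset.card_insert_le _ _) (by simp)
        simp only [Finset.card_univ, Fintype.card_bool, c1] at hcard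
        omega
      -- whole component of u is {u, v}, contradiction
      have comp : ∀ (x z : ℕ) (w : S.Walk x z), (x = u ∨ x = v) → (z = u ∨ z = v) := by
        intro x z w
        induction w with
        | nil => exact id
        | cons h p ih => intro hx; exact ih (closed _ _ hx h)
      obtain ⟨w⟩ := hSconn.preconnected u (u + v + 1)
      have := comp _ _ w (Or.inl rfl)
      omega
    -- four points in one column is impossible
    have fourcol : ∀ p q : ℕ, p ≠ q → (ρ (p,false)).1 = (ρ (q,false)).1 → False := by
      intro p q hpq hEq
      have d1 : ρ (p,false) ≠ ρ (p,true) := fun h => by have := hinj h; simp at this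
      have d2 : ρ (p,false) ≠ ρ (q,false) := fun h => hpq (by have := hinj h; simpa using this)
      have d3 : ρ (p,true) ≠ ρ (q,false) := fun h => by have := hinj h; simp [hpq] at this
      exact pigeon3 (col p) hEq d1 d2 d3
    refine ⟨fun u => (ρ (u,false)).1, ?_, ?_⟩
    · intro u v h
      by_contra hne
      rcases (key u v false false).2 (Or.inl h) with he | ha
      · exact hne he
      · exact fourcol u v hne h
    · intro u v
      constructor
      · intro h
        rcases (key u v false false).1 (Or.inr h) with he | ha
        · exact (fourcol u v h.ne he).elim
        · exact ha
      · intro h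
        rcases (key u v false false).2 (Or.inr h) with he | hs
        · subst he; exact (h.ne rfl).elim
        · exact hs
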